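/- Let f(t,u,v) := u·(2 − t·sin(uv)), h1[u] := u(1/4)·cos²(u'(3/4)), h2[u] := u(3/4)·sin²(u'(1/4)), and suppose λ, η1, η2 ≥ 0 satisfy (3/2)·λ + η1 + η2 < 1. Then the only solution of the boundary value problem u''(t) + λ u(t)(2 − t sin(u(t)u'(t))) = 0, u(0) = η1 h1[u], u'(1) = η2 h2[u] that is non-negative and non-decreasing on [0,1] is the zero function. In particular this holds for λ = 1/3, η1 = 1/4, η2 = 1/5. -/

import Mathlib

open MeasureTheory Set Bornology

noncomputable section

/-- The interval `[0,1]`. -/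
abbrev I01 : Set ℝ := Set.Icc 0 1

/-- The space `C[0,1] × C[0,1]`; an element of `C¹[0,1]` is encoded as the pair `(u, u')`.
The product norm is exactly `‖(u,u')‖ = max {‖u‖_∞, ‖u'‖_∞}`. -/
abbrev E := C(I01, ℝ) × C(I01, ℝ)

/-- The extension to `ℝ` of a continuous function on `[0,1]` (constant outside `[0,1]`). -/
def ext01 (g : C(I01, ℝ)) : ℝ → ℝ := Set.IccExtend zero_le_one ⇑g

/-- `p = (u, u')` encodes a `C¹` function: `u'` is the derivative of `u` on `[0,1]`. -/
def IsC1 (p : E) : Prop :=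
  ∀ t : I01, HasDerivWithinAt (ext01 p.1) (p.2 t) I01 (t : ℝ)

/-- The cone `P` of non-negative `C¹[0,1]` functions with non-negative derivative. -/
def coneP : Set E :=
  {p | IsC1 p ∧ ∀ t : I01, 0 ≤ p.1 t ∧ 0 ≤ p.2 t}

/-- Example 3.2 in the paper: for parameters with `(3/2)λ + η₁ + η₂ < 1`, the only
non-negative, non-decreasing solution of the BVP
`u'' + λ u (2 - t sin(u u')) = 0`, `u(0) = η₁ u(1/4) cos²(u'(3/4))`,
`u'(1) = η₂ u(3/4) sin²(u'(1/4))` is the zero function. -/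
theorem example_nonexistence
    (η₁ η₂ lam : ℝ) (hη₁ : 0 ≤ η₁) (hη₂ : 0 ≤ η₂) (hlam : 0 ≤ lam)
    (hlt : 3/2 * lam + η₁ + η₂ < 1) :
    ∀ p ∈ coneP, ∀ u'' : ℝ → ℝ,
      ContinuousOn u'' I01 →
      (∀ t ∈ I01, HasDerivWithinAt (ext01 p.2) (u'' t) I01 t) →
      (∀ t ∈ I01, u'' t +
        lam * (ext01 p.1 t * (2 - t * Real.sin (ext01 p.1 t * ext01 p.2 t))) = 0) →
      p.1 ⟨0, by norm_num⟩ =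
        η₁ * (p.1 ⟨1/4, by norm_num⟩ * (Real.cos (p.2 ⟨3/4, by norm_num⟩)) ^ 2) →
      p.2 ⟨1, by norm_num⟩ =
        η₂ * (p.1 ⟨3/4, by norm_num⟩ * (Real.sin (p.2 ⟨1/4, by norm_num⟩)) ^ 2) →
      ∀ t : I01, p.1 t = 0 := by
  intro p hp u'' hcont hderiv heq hbc0 hbc1
  obtain ⟨hC1, hpos⟩ := hp
  set u : ℝ → ℝ := ext01 p.1 with hu_def
  set v : ℝ → ℝ := ext01 p.2 with hv_def
  have hue : ∀ (t : ℝ) (ht : t ∈ I01), u t = p.1 ⟨t, ht⟩ := fun t ht =>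
    Set.IccExtend_of_mem _ _ ht
  have hve : ∀ (t : ℝ) (ht : t ∈ I01), v t = p.2 ⟨t, ht⟩ := fun t ht =>
    Set.IccExtend_of_mem _ _ ht
  have hu0 : ∀ t ∈ I01, 0 ≤ u t := fun t ht => by rw [hue t ht]; exact (hpos _).1
  have hv0 : ∀ t ∈ I01, 0 ≤ v t := fun t ht => by rw [hve t ht]; exact (hpos _).2
  have h01 : (1:ℝ) ∈ I01 := by norm_num
  have h00 : (0:ℝ) ∈ I01 := by norm_num
  set A : ℝ := u 1 with hA_def
  have hconv : Convex ℝ I01 := convex_Icc 0 1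
  have hintsub : interior I01 ⊆ I01 := interior_subset
  -- derivative of u within I01 is v
  have hderu : ∀ t ∈ I01, HasDerivWithinAt u (v t) I01 t := fun t ht => by
    rw [hve t ht]; exact hC1 ⟨t, ht⟩
  -- u is monotone on I01
  have humono : MonotoneOn u I01 :=
    monotoneOn_of_hasDerivWithinAt_nonneg hconv
      (fun t ht => (hderu t ht).continuousWithinAt)
      (fun t ht => (hderu t (hintsub ht)).mono hintsub)
      (fun t ht => hv0 t (hintsub ht))
  have hA : ∀ t ∈ I01, u t ≤ A := fun t ht => humono ht h01 ht.2
  have hA0 : 0 ≤ A := hu0 1 h01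
  -- bound on u''
  have hbound : ∀ t ∈ I01, 0 ≤ u'' t + 3 * lam * A := by
    intro t ht
    have h1 := heq t ht
    have hs1 := Real.sin_le_one (u t * v t)
    have hs2 := Real.neg_one_le_sin (u t * v t)
    have hut := hu0 t ht
    have hutA := hA t ht
    nlinarith [mul_nonneg hut (sub_nonneg.2 hs1), mul_nonneg hlam hut,
      mul_nonneg (mul_nonneg hlam hut) ht.1,
      mul_nonneg hlam (mul_nonneg hut (sub_nonneg.2 hs1)),
      mul_le_mul_of_nonneg_left (mul_le_mul_of_nonneg_right ht.2 hut) hlam,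
      mul_nonneg (mul_nonneg hlam (sub_nonneg.2 hutA)) ht.1]
  -- step 1 : v s ≤ v 1 + 3 lam A (1 - s)
  have hg : ∀ s ∈ I01, v s ≤ v 1 + 3 * lam * A * (1 - s) := by
    have hgd : ∀ s ∈ I01, HasDerivWithinAt (fun x => v x + 3 * lam * A * x)
        (u'' s + 3 * lam * A) I01 s := by
      intro s hs
      have := (hderiv s hs).add
        (((hasDerivAt_id s).const_mul (3 * lam * A)).hasDerivWithinAt (s := I01))
      simpa [Pi.add_def] using this
    have hmono : MonotoneOn (fun x => v x + 3 * lam * A * x) I01 :=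
      monotoneOn_of_hasDerivWithinAt_nonneg hconv
        (fun s hs => (hgd s hs).continuousWithinAt)
        (fun s hs => (hgd s (hintsub hs)).mono hintsub)
        (fun s hs => hbound s (hintsub hs))
    intro s hs
    have := hmono hs h01 hs.2
    simp only at this
    linarith
  -- step 2 : u 1 ≤ u 0 + v 1 + 3/2 lam A
  have hstep2 : u 1 ≤ u 0 + v 1 + 3 / 2 * lam * A := by
    have hhd : ∀ s ∈ I01, HasDerivWithinAt
        (fun x => v 1 * x + 3 * lam * A * (x - x ^ 2 / 2) - u x)
        (v 1 + 3 * lam * A * (1 - s) - v s) I01 s := by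
      intro s hs
      have h1 : HasDerivAt (fun x : ℝ => v 1 * x + 3 * lam * A * (x - x ^ 2 / 2))
          (v 1 + 3 * lam * A * (1 - s)) s := by
        have ha := (hasDerivAt_id s).const_mul (v 1)
        have hb := (((hasDerivAt_pow 2 s).div_const 2).const_mul (3 * lam * A))
        have hc := ((hasDerivAt_id s).sub ((hasDerivAt_pow 2 s).div_const 2)).const_mul
          (3 * lam * A)
        have := ha.add hc
        convert this using 1
        · rfl
        · rfl
        · rfl
        · ring
      have := (h1.hasDerivWithinAt (s := I01)).sub (hderu s hs)
      simpa [Pi.sub_def] using this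
    have hmono : MonotoneOn (fun x => v 1 * x + 3 * lam * A * (x - x ^ 2 / 2) - u x) I01 :=
      monotoneOn_of_hasDerivWithinAt_nonneg hconv
        (fun s hs => (hhd s hs).continuousWithinAt)
        (fun s hs => (hhd s (hintsub hs)).mono hintsub)
        (fun s hs => by have := hg s (hintsub hs); linarith)
    have := hmono h00 h01 zero_le_one
    simp only at this
    nlinarith [this]
  -- boundary estimates
  have hu0val : u 0 ≤ η₁ * A := by
    rw [hue 0 h00, hbc0]
    have h14 : (1/4 : ℝ) ∈ I01 := by norm_num
    have hc : (Real.cos (p.2 ⟨3/4, by norm_num⟩)) ^ 2 ≤ 1 := Real.cos_sq_le_one _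
    have hu14 : p.1 ⟨1/4, by norm_num⟩ ≤ A := by
      have := hA (1/4) h14; rwa [hue (1/4) h14] at this
    have hu14n : 0 ≤ p.1 ⟨1/4, by norm_num⟩ := (hpos _).1
    have : p.1 ⟨1/4, by norm_num⟩ * (Real.cos (p.2 ⟨3/4, by norm_num⟩)) ^ 2 ≤ A :=
      le_trans (mul_le_of_le_one_right hu14n hc) hu14
    exact mul_le_mul_of_nonneg_left this hη₁
  have hv1val : v 1 ≤ η₂ * A := by
    rw [hve 1 h01, hbc1]
    have h34 : (3/4 : ℝ) ∈ I01 := by norm_num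
    have hs : (Real.sin (p.2 ⟨1/4, by norm_num⟩)) ^ 2 ≤ 1 := Real.sin_sq_le_one _
    have hu34 : p.1 ⟨3/4, by norm_num⟩ ≤ A := by
      have := hA (3/4) h34; rwa [hue (3/4) h34] at this
    have hu34n : 0 ≤ p.1 ⟨3/4, by norm_num⟩ := (hpos _).1
    have : p.1 ⟨3/4, by norm_num⟩ * (Real.sin (p.2 ⟨1/4, by norm_num⟩)) ^ 2 ≤ A :=
      le_trans (mul_le_of_le_one_right hu34n hs) hu34
    exact mul_le_mul_of_nonneg_left this hη₂
  have hAzero : A = 0 := by nlinarith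
  intro t
  have ht := t.2
  have h1 : u (t : ℝ) ≤ 0 := by rw [← hAzero]; exact hA _ ht
  have h2 : 0 ≤ u (t : ℝ) := hu0 _ ht
  have : u (t : ℝ) = 0 := le_antisymm h1 h2
  rw [hue _ ht] at this
  simpa using this
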